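/- Let G be a Hausdorff locally compact group, φ a continuous endomorphism of G, and H a φ-invariant open normal subgroup of G. Then h_top(φ) = h_top(φ|_H) and the endomorphism φ̄ induced by φ on the (discrete) quotient G/H satisfies h_top(φ̄) = 0. -/

import Mathlib

open MeasureTheory Filter Topology Pointwise
open scoped ENNReal NNReal Classical

/-- The `n`-th `φ`-cotrajectory of `U`: `U ∩ φ⁻¹(U) ∩ … ∩ φ⁻⁽ⁿ⁻¹⁾(U)`. -/
def cotraj {G : Type*} (φ : G → G) (U : Set G) (n : ℕ) : Set G :=
  ⋂ k ∈ Finset.range n, (φ^[k]) ⁻¹' U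

/-- Topological entropy of a (continuous) endomorphism of a locally compact Hausdorff
topological group, computed with respect to a left Haar measure:
`h_top(φ) = sup_U limsup_n (−log μ(C_n(φ,U)))/n`, the supremum over all compact
neighborhoods `U` of `1`. -/
noncomputable def mulHtop {G : Type*} [Group G] [TopologicalSpace G] (φ : G → G) : ℝ≥0∞ :=
  letI : MeasurableSpace G := borel G
  haveI : BorelSpace G := ⟨rfl⟩
  if h : IsTopologicalGroup G ∧ T2Space G ∧ LocallyCompactSpace G then
    haveI := h.1
    haveI := h.2.1
    haveI := h.2.2
    ⨆ U ∈ {U : Set G | IsCompact U ∧ U ∈ 𝓝 (1 : G)},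
      Filter.atTop.limsup fun n : ℕ =>
        ENNReal.ofReal
          ((-Real.log ((MeasureTheory.Measure.haar (cotraj φ U n)).toReal)) / n)
  else 0

/-- The restriction of an endomorphism to an invariant subgroup
(junk value `1` if the subgroup is not invariant). -/
noncomputable def mulSubHom {G : Type*} [Group G] (φ : G →* G) (H : Subgroup G) : H →* H :=
  if h : H ≤ H.comap φ then (φ.domRestrict H).codRestrict H (fun x => h x.2) else 1

/-- The endomorphism induced on the quotient by an invariant normal subgroup
(junk value `1` if the subgroup is not invariant). -/
noncomputable def mulQuotHom {G : Type*} [Group G] (φ : G →* G) (H : Subgroup G) [H.Normal] :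
    G ⧸ H →* G ⧸ H :=
  if h : H ≤ H.comap φ then QuotientGroup.map H H φ h else 1

section Aux

lemma cotraj_subset {G : Type*} (φ : G → G) (U : Set G) {n : ℕ} (hn : 1 ≤ n) :
    cotraj φ U n ⊆ U := by
  intro x hx
  have := Set.mem_iInter₂.1 hx 0 (Finset.mem_range.2 hn)
  simpa using this

lemma mem_cotraj {G : Type*} {φ : G → G} {U : Set G} {n : ℕ} {x : G} :
    x ∈ cotraj φ U n ↔ ∀ k < n, φ^[k] x ∈ U := by
  simp [cotraj, Set.mem_iInter₂, Finset.mem_range]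

lemma cotraj_mono {G : Type*} (φ : G → G) {U V : Set G} (h : U ⊆ V) (n : ℕ) :
    cotraj φ U n ⊆ cotraj φ V n := by
  intro x hx
  rw [mem_cotraj] at hx ⊢
  exact fun k hk => h (hx k hk)

lemma one_mem_cotraj {G : Type*} [Group G] (φ : G →* G) {U : Set G} (hU : (1 : G) ∈ U) (n : ℕ) :
    (1 : G) ∈ cotraj (⇑φ) U n := by
  rw [mem_cotraj]
  intro k _
  rw [iterate_map_one]
  exact hU

lemma cotraj_mem_nhds {G : Type*} [Group G] [TopologicalSpace G] (φ : G →* G)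
    (hφ : Continuous φ) {U : Set G} (hU : U ∈ 𝓝 (1 : G)) (n : ℕ) :
    cotraj (⇑φ) U n ∈ 𝓝 (1 : G) := by
  rw [cotraj, Filter.biInter_finset_mem]
  intro k _
  refine (hφ.iterate k).continuousAt.preimage_mem_nhds ?_
  rwa [iterate_map_one]

lemma cotraj_measurableSet {G : Type*} [TopologicalSpace G] [MeasurableSpace G] [BorelSpace G]
    {φ : G → G} (hφ : Continuous φ) {U : Set G} (hU : IsClosed U) (n : ℕ) :
    MeasurableSet (cotraj φ U n) := by
  refine MeasurableSet.biInter (Set.to_countable _) fun k _ => ?_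
  exact (hφ.iterate k).measurable hU.measurableSet

/-- The `limsup` expression appearing in `mulHtop`, made explicit. -/
noncomputable def entTerm {G : Type*} [MeasurableSpace G] (μ : Measure G) (φ : G → G)
    (U : Set G) : ℝ≥0∞ :=
  Filter.atTop.limsup fun n : ℕ =>
    ENNReal.ofReal ((-Real.log ((μ (cotraj φ U n)).toReal)) / n)

lemma mulHtop_eq {G : Type*} [Group G] [TopologicalSpace G] [tg : IsTopologicalGroup G]
    [t2 : T2Space G] [lc : LocallyCompactSpace G] (φ : G → G) :
    mulHtop φ =
      (letI : MeasurableSpace G := borel G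
       haveI : BorelSpace G := ⟨rfl⟩
       ⨆ U ∈ {U : Set G | IsCompact U ∧ U ∈ 𝓝 (1 : G)}, entTerm Measure.haar φ U) := by
  rw [mulHtop, dif_pos ⟨tg, t2, lc⟩]
  rfl

lemma aux_limsup_le (a : ℝ) (m : ℕ → ℝ) :
    atTop.limsup (fun n : ℕ => ENNReal.ofReal ((a + m n) / n)) ≤
      atTop.limsup (fun n : ℕ => ENNReal.ofReal (m n / n)) := by
  set w : ℕ → ℝ≥0∞ := fun n : ℕ => ENNReal.ofReal (m n / n) with hw
  have h0 : Tendsto (fun n : ℕ => ENNReal.ofReal (|a| / n)) atTop (𝓝 0) := by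
    rw [show (0 : ℝ≥0∞) = ENNReal.ofReal 0 by simp]
    exact ENNReal.tendsto_ofReal (tendsto_const_div_atTop_nhds_zero_nat |a|)
  rcases eq_top_or_lt_top (atTop.limsup w) with htop | htop
  · rw [htop]; exact le_top
  refine ENNReal.le_of_forall_pos_le_add fun ε hε _ => ?_
  have hev : ∀ᶠ n : ℕ in atTop, ENNReal.ofReal ((a + m n) / n) ≤ w n + (ε : ℝ≥0∞) := by
    filter_upwards [h0.eventually_lt_const (show (0:ℝ≥0∞) < ε by exact_mod_cast hε)] with n hn
    have h1 : (a + m n) / n = m n / n + a / n := by ring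
    calc ENNReal.ofReal ((a + m n) / n) = ENNReal.ofReal (m n / n + a / n) := by rw [h1]
      _ ≤ ENNReal.ofReal (m n / n) + ENNReal.ofReal (a / n) := ENNReal.ofReal_add_le
      _ ≤ w n + ENNReal.ofReal (|a| / n) := by
          refine add_le_add le_rfl (ENNReal.ofReal_le_ofReal ?_)
          rw [div_eq_mul_inv, div_eq_mul_inv]
          exact mul_le_mul_of_nonneg_right (le_abs_self a) (by positivity)
      _ ≤ w n + (ε : ℝ≥0∞) := add_le_add le_rfl hn.le
  calc atTop.limsup (fun n : ℕ => ENNReal.ofReal ((a + m n) / n))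
      ≤ atTop.limsup (fun n : ℕ => w n + (ε : ℝ≥0∞)) := limsup_le_limsup hev
    _ = atTop.limsup w + (ε : ℝ≥0∞) := by
        refine limsup_add_const atTop w (ε : ℝ≥0∞) ⟨⊤, ?_⟩ ⟨0, fun a _ => zero_le⟩
        exact Filter.eventually_map.2 (Eventually.of_forall fun _ => le_top)

lemma aux_limsup_shift (a : ℝ) (m : ℕ → ℝ) :
    atTop.limsup (fun n : ℕ => ENNReal.ofReal ((a + m n) / n)) =
      atTop.limsup (fun n : ℕ => ENNReal.ofReal (m n / n)) := by
  refine le_antisymm (aux_limsup_le a m) ?_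
  have h := aux_limsup_le (-a) (fun n => a + m n)
  simpa using h

lemma mulHtop_of_discrete {G : Type*} [Group G] [TopologicalSpace G] [DiscreteTopology G]
    (φ : G →* G) : mulHtop ⇑φ = 0 := by
  haveI : ContinuousMul G := ⟨continuous_of_discreteTopology⟩
  haveI : ContinuousInv G := ⟨continuous_of_discreteTopology⟩
  haveI : IsTopologicalGroup G := ⟨⟩
  rw [mulHtop_eq]
  letI : MeasurableSpace G := borel G
  haveI : BorelSpace G := ⟨rfl⟩
  set μ : Measure G := Measure.haar with hμ
  refine le_antisymm ?_ zero_le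
  refine iSup₂_le fun U hU => ?_
  obtain ⟨hUc, hU1⟩ := hU
  have h1U : (1 : G) ∈ U := mem_of_mem_nhds hU1
  have hpos : 0 < μ {1} := (isOpen_discrete _).measure_pos μ ⟨1, rfl⟩
  have hUfin : μ U < ⊤ := hUc.measure_lt_top
  have hle : ∀ᶠ n : ℕ in atTop,
      ENNReal.ofReal ((-Real.log ((μ (cotraj (⇑φ) U n)).toReal)) / n) ≤
        ENNReal.ofReal ((-Real.log ((μ ({1} : Set G)).toReal)) / n) := by
    filter_upwards [eventually_ge_atTop 1] with n hn
    have hsub : ({1} : Set G) ⊆ cotraj (⇑φ) U n :=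
      Set.singleton_subset_iff.2 (one_mem_cotraj φ h1U n)
    have hC1 : μ {1} ≤ μ (cotraj (⇑φ) U n) := measure_mono hsub
    have hC2 : μ (cotraj (⇑φ) U n) ≤ μ U := measure_mono (cotraj_subset _ _ hn)
    have hfin : μ (cotraj (⇑φ) U n) ≠ ⊤ := (hC2.trans_lt hUfin).ne
    have h1 : 0 < (μ ({1} : Set G)).toReal :=
      ENNReal.toReal_pos hpos.ne' (hC1.trans_lt (hC2.trans_lt hUfin)).ne
    have h2 : (μ ({1} : Set G)).toReal ≤ (μ (cotraj (⇑φ) U n)).toReal :=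
      (ENNReal.toReal_le_toReal (hC1.trans_lt (hC2.trans_lt hUfin)).ne hfin).2 hC1
    refine ENNReal.ofReal_le_ofReal ?_
    have hn' : (0 : ℝ) < n := by exact_mod_cast hn
    gcongr
  have h0 : Tendsto (fun n : ℕ =>
      ENNReal.ofReal ((-Real.log ((μ ({1} : Set G)).toReal)) / n)) atTop (𝓝 0) := by
    rw [show (0 : ℝ≥0∞) = ENNReal.ofReal 0 by simp]
    exact ENNReal.tendsto_ofReal (tendsto_const_div_atTop_nhds_zero_nat _)
  calc entTerm μ (⇑φ) U ≤ atTop.limsup (fun n : ℕ =>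
        ENNReal.ofReal ((-Real.log ((μ ({1} : Set G)).toReal)) / n)) := limsup_le_limsup hle
    _ = 0 := h0.limsup_eq

end Aux

lemma entTerm_le_of_subset {G : Type*} [Group G] [TopologicalSpace G]
    [MeasurableSpace G] [BorelSpace G]
    (μ : Measure G) [μ.IsOpenPosMeasure] [IsFiniteMeasureOnCompacts μ]
    (φ : G →* G) (hφc : Continuous ⇑φ) {U V : Set G} (hVU : V ⊆ U) (hUc : IsCompact U)
    (hV : V ∈ 𝓝 (1 : G)) :
    entTerm μ ⇑φ U ≤ entTerm μ ⇑φ V := by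
  refine limsup_le_limsup ?_
  filter_upwards [eventually_ge_atTop 1] with n hn
  have hCV : 0 < μ (cotraj (⇑φ) V n) := μ.measure_pos_of_mem_nhds (cotraj_mem_nhds φ hφc hV n)
  have hCU : μ (cotraj (⇑φ) U n) ≤ μ U := measure_mono (cotraj_subset _ _ hn)
  have hfinU : μ (cotraj (⇑φ) U n) < ⊤ := hCU.trans_lt hUc.measure_lt_top
  have hmono : μ (cotraj (⇑φ) V n) ≤ μ (cotraj (⇑φ) U n) := measure_mono (cotraj_mono _ hVU n)
  have h1 : 0 < (μ (cotraj (⇑φ) V n)).toReal :=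
    ENNReal.toReal_pos hCV.ne' (hmono.trans_lt hfinU).ne
  have h2 : (μ (cotraj (⇑φ) V n)).toReal ≤ (μ (cotraj (⇑φ) U n)).toReal :=
    (ENNReal.toReal_le_toReal (hmono.trans_lt hfinU).ne hfinU.ne).2 hmono
  refine ENNReal.ofReal_le_ofReal ?_
  have hn' : (0 : ℝ) < n := by exact_mod_cast hn
  gcongr

lemma entTerm_scale {G : Type*} [MeasurableSpace G] (μ ν : Measure G) (φ : G → G) (U : Set G)
    (c : ℝ≥0) (hc : 0 < c)
    (hpos : ∀ n : ℕ, 1 ≤ n → 0 < ν (cotraj φ U n))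
    (hfin : ∀ n : ℕ, 1 ≤ n → ν (cotraj φ U n) ≠ ⊤)
    (heq : ∀ n : ℕ, 1 ≤ n → μ (cotraj φ U n) = c • ν (cotraj φ U n)) :
    entTerm μ φ U = entTerm ν φ U := by
  have h1 : entTerm μ φ U = atTop.limsup (fun n : ℕ =>
      ENNReal.ofReal (((-Real.log (c : ℝ)) + (-Real.log ((ν (cotraj φ U n)).toReal))) / n)) := by
    refine limsup_congr ?_
    filter_upwards [eventually_ge_atTop 1] with n hn
    congr 2
    rw [heq n hn, ENNReal.smul_def, smul_eq_mul, ENNReal.toReal_mul, ENNReal.coe_toReal,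
      Real.log_mul (by exact_mod_cast hc.ne') (ENNReal.toReal_pos (hpos n hn).ne' (hfin n hn)).ne',
      neg_add]
  rw [h1, aux_limsup_shift]
  rfl


/-- If `G` is a locally compact group, `φ` a continuous endomorphism and
`H` a `φ`-invariant open normal subgroup, then `h_top(φ) = h_top(φ|_H)` and the induced
endomorphism on the discrete quotient `G/H` has zero topological entropy. -/
theorem entropy_eq_of_open_invariant_normal_subgroup
    (G : Type*) [Group G] [TopologicalSpace G] [IsTopologicalGroup G]
    [T2Space G] [LocallyCompactSpace G]
    (φ : G →* G) (hφ : Continuous φ) (H : Subgroup G) [H.Normal]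
    (hopen : IsOpen (H : Set G)) (hinv : H ≤ H.comap φ) :
    mulHtop ⇑φ = mulHtop ⇑(mulSubHom φ H) ∧ mulHtop ⇑(mulQuotHom φ H) = 0 := by
  refine ⟨?_, ?_⟩
  swap
  · haveI : DiscreteTopology (G ⧸ H) := QuotientGroup.discreteTopology hopen
    exact mulHtop_of_discrete (mulQuotHom φ H)
  haveI hlcH : LocallyCompactSpace H := hopen.locallyCompactSpace
  rw [mulHtop_eq ⇑φ, mulHtop_eq ⇑(mulSubHom φ H)]
  letI mG : MeasurableSpace G := borel G
  haveI : BorelSpace G := ⟨rfl⟩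
  letI mH : MeasurableSpace H := borel H
  haveI : BorelSpace H := ⟨rfl⟩
  -- the restricted endomorphism
  have hψval : ∀ x : H, ((mulSubHom φ H) x : G) = φ (x : G) := by
    intro x
    rw [mulSubHom, dif_pos hinv]
    rfl
  have hψc : Continuous ⇑(mulSubHom φ H) := by
    apply continuous_induced_rng.2
    have : (Subtype.val ∘ ⇑(mulSubHom φ H)) = ⇑φ ∘ (Subtype.val : H → G) := by
      funext x; exact hψval x
    rw [this]
    exact hφ.comp continuous_subtype_val
  have hiter : ∀ (k : ℕ) (x : H), ((⇑(mulSubHom φ H))^[k] x : G) = (⇑φ)^[k] (x : G) := by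
    intro k
    induction k with
    | zero => intro x; simp
    | succ k ih =>
      intro x
      rw [Function.iterate_succ_apply, Function.iterate_succ_apply, ih, hψval]
  -- the comap measure
  set μ : Measure G := Measure.haar with hμdef
  have hmeq : mH = (Subtype.instMeasurableSpace : MeasurableSpace H) := borel_comap
  have hval : MeasurableEmbedding ((↑) : H → G) := by
    rw [hmeq]
    exact MeasurableEmbedding.subtype_coe hopen.measurableSet
  set ν : Measure H := μ.comap Subtype.val with hνdef
  have hν_apply : ∀ s : Set H, MeasurableSet s → ν s = μ (Subtype.val '' s) := fun s hs =>
    Measure.comap_apply _ Subtype.val_injective (fun t ht => hval.measurableSet_image' ht) μ hs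
  haveI hν_inv : ν.IsMulLeftInvariant := by
    constructor
    intro h
    ext s hs
    rw [Measure.map_apply (measurable_const_mul h) hs,
      hν_apply _ (measurable_const_mul h hs), hν_apply _ hs]
    have himg : (Subtype.val '' ((h * ·) ⁻¹' s)) =
        ((h : G) * ·) ⁻¹' (Subtype.val '' s) := by
      ext y
      constructor
      · rintro ⟨x, hx, rfl⟩
        exact ⟨h * x, hx, rfl⟩
      · rintro ⟨z, hz, hzy⟩
        refine ⟨h⁻¹ * z, ?_, ?_⟩
        · show h * (h⁻¹ * z) ∈ s
          simpa using hz
        · show ((h⁻¹ * z : H) : G) = y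
          push_cast
          rw [hzy]
          group
    rw [himg, measure_preimage_mul]
  haveI hν_fin : IsFiniteMeasureOnCompacts ν := by
    constructor
    intro K hK
    rw [hν_apply K hK.isClosed.measurableSet]
    exact (hK.image continuous_subtype_val).measure_lt_top
  haveI hν_pos : ν.IsOpenPosMeasure := by
    constructor
    intro V hV hne
    rw [hν_apply V hV.measurableSet]
    exact ((hopen.isOpenEmbedding_subtypeVal.isOpenMap V hV).measure_pos μ
      (hne.image _)).ne'
  haveI hν_haar : ν.IsHaarMeasure :=
    { toIsFiniteMeasureOnCompacts := hν_fin, toIsMulLeftInvariant := hν_inv,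
      toIsOpenPosMeasure := hν_pos }
  set κ : Measure H := Measure.haar with hκdef
  set c : ℝ≥0 := ν.haarScalarFactor κ with hcdef
  have hc : 0 < c := Measure.haarScalarFactor_pos_of_isHaarMeasure ν κ
  have hprec : ∀ U : Set G, IsCompact U → U ⊆ (H : Set G) →
      IsCompact (Subtype.val ⁻¹' U : Set H) := by
    intro U hUc hUH
    rw [Topology.IsInducing.subtypeVal.isCompact_iff]
    have h2 : Subtype.val '' (Subtype.val ⁻¹' U : Set H) = U :=
      Set.image_preimage_eq_of_subset (by rwa [Subtype.range_val])
    exact h2.symm ▸ hUc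
  have hpren : ∀ U : Set G, U ∈ 𝓝 (1 : G) → (Subtype.val ⁻¹' U : Set H) ∈ 𝓝 (1 : H) := by
    intro U hU1
    exact continuous_subtype_val.continuousAt.preimage_mem_nhds hU1
  have key : ∀ U : Set G, IsCompact U → U ∈ 𝓝 (1 : G) → U ⊆ (H : Set G) →
      entTerm μ ⇑φ U = entTerm κ ⇑(mulSubHom φ H) (Subtype.val ⁻¹' U) := by
    intro U hUc hU1 hUH
    set V : Set H := Subtype.val ⁻¹' U with hVdef
    have hVclosed : IsClosed V := hUc.isClosed.preimage continuous_subtype_val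
    have hVc : IsCompact V := hprec U hUc hUH
    have hV1 : V ∈ 𝓝 (1 : H) := hpren U hU1
    have hmemtr : ∀ (n : ℕ) (x : H),
        x ∈ cotraj (⇑(mulSubHom φ H)) V n ↔ (x : G) ∈ cotraj ⇑φ U n := by
      intro n x
      rw [mem_cotraj, mem_cotraj]
      refine forall₂_congr fun k hk => ?_
      rw [hVdef]
      rw [Set.mem_preimage, hiter k x]
    have him : ∀ n : ℕ, 1 ≤ n →
        Subtype.val '' (cotraj (⇑(mulSubHom φ H)) V n) = cotraj ⇑φ U n := by
      intro n hn
      ext y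
      constructor
      · rintro ⟨x, hx, rfl⟩
        exact (hmemtr n x).1 hx
      · intro hy
        have hyH : y ∈ H := hUH (cotraj_subset _ _ hn hy)
        exact ⟨⟨y, hyH⟩, (hmemtr n ⟨y, hyH⟩).2 hy, rfl⟩
    have hmeas : ∀ n : ℕ, MeasurableSet (cotraj (⇑(mulSubHom φ H)) V n) :=
      fun n => cotraj_measurableSet hψc hVclosed n
    have hνμ : ∀ n : ℕ, 1 ≤ n →
        ν (cotraj (⇑(mulSubHom φ H)) V n) = μ (cotraj ⇑φ U n) := by
      intro n hn
      rw [hν_apply _ (hmeas n), him n hn]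
    have hκpos : ∀ n : ℕ, 1 ≤ n → 0 < κ (cotraj (⇑(mulSubHom φ H)) V n) :=
      fun n _ => κ.measure_pos_of_mem_nhds (cotraj_mem_nhds _ hψc hV1 n)
    have hκfin : ∀ n : ℕ, 1 ≤ n → κ (cotraj (⇑(mulSubHom φ H)) V n) ≠ ⊤ :=
      fun n hn => ((measure_mono (cotraj_subset _ _ hn)).trans_lt hVc.measure_lt_top).ne
    have hscale : ∀ n : ℕ, 1 ≤ n → ν (cotraj (⇑(mulSubHom φ H)) V n) =
        c • κ (cotraj (⇑(mulSubHom φ H)) V n) :=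
      fun n hn => Measure.measure_isMulInvariant_eq_smul_of_isCompact_closure ν κ
        (hVc.closure_of_subset (cotraj_subset _ _ hn))
    have e1 : entTerm μ ⇑φ U = entTerm ν ⇑(mulSubHom φ H) V := by
      refine limsup_congr ?_
      filter_upwards [eventually_ge_atTop 1] with n hn
      rw [hνμ n hn]
    rw [e1]
    exact entTerm_scale ν κ _ V c hc hκpos hκfin hscale
  have part1 : (⨆ U ∈ {U : Set G | IsCompact U ∧ U ∈ 𝓝 (1 : G)}, entTerm μ ⇑φ U)
      = ⨆ V ∈ {V : Set H | IsCompact V ∧ V ∈ 𝓝 (1 : H)},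
          entTerm κ ⇑(mulSubHom φ H) V := by
    apply le_antisymm
    · refine iSup₂_le fun U hU => ?_
      obtain ⟨hUc, hU1⟩ := hU
      obtain ⟨K, hK1, hKH, hKc⟩ :=
        local_compact_nhds (show (H : Set G) ∈ 𝓝 (1 : G) from hopen.mem_nhds H.one_mem)
      have hU'c : IsCompact (U ∩ K) := hUc.inter_right hKc.isClosed
      have hU'1 : U ∩ K ∈ 𝓝 (1 : G) := Filter.inter_mem hU1 hK1
      have hU'H : U ∩ K ⊆ (H : Set G) := Set.inter_subset_right.trans hKH
      have hle : entTerm μ ⇑φ U ≤ entTerm μ ⇑φ (U ∩ K) :=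
        entTerm_le_of_subset μ φ hφ Set.inter_subset_left hUc hU'1
      rw [key (U ∩ K) hU'c hU'1 hU'H] at hle
      refine hle.trans ?_
      exact le_iSup₂ (f := fun V (_ : V ∈ {V : Set H | IsCompact V ∧ V ∈ 𝓝 (1 : H)}) =>
        entTerm κ ⇑(mulSubHom φ H) V) (Subtype.val ⁻¹' (U ∩ K))
        ⟨hprec _ hU'c hU'H, hpren _ hU'1⟩
    · refine iSup₂_le fun V hV => ?_
      obtain ⟨hVc, hV1⟩ := hV
      set U : Set G := Subtype.val '' V with hUdef
      have hUc : IsCompact U := hVc.image continuous_subtype_val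
      have hU1 : U ∈ 𝓝 (1 : G) := by
        have h3 := (hopen.isOpenEmbedding_subtypeVal.isOpenMap).image_mem_nhds hV1
        exact h3
      have hUH : U ⊆ (H : Set G) := by
        rintro y ⟨x, _, rfl⟩
        exact x.2
      have hpre : Subtype.val ⁻¹' U = V :=
        Function.Injective.preimage_image Subtype.val_injective V
      have h4 := key U hUc hU1 hUH
      rw [hpre] at h4
      rw [← h4]
      exact le_iSup₂ (f := fun U (_ : U ∈ {U : Set G | IsCompact U ∧ U ∈ 𝓝 (1 : G)}) =>
        entTerm μ ⇑φ U) U ⟨hUc, hU1⟩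
  exact part1
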